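/- The identity of differential operators K^up_{w+6} ∘ K^up_w = E₄² L_w - ((w+6)/6) E₆ K^up_w + 12(w+1)(w+5) Δ holds, where L_w = ∂_{w-1}² - ((w²-1)/144) E₄, K^up_w = E₄ ∂_{w-1} - ((w+1)/12) E₆, acting on quasimodular forms of weight w. -/

import Mathlib

open PowerSeries Finset

/-- The operator `D = q d/dq` acting on `q`-expansions (formal power series in `q`). -/
noncomputable def Dq (f : PowerSeries ℚ) : PowerSeries ℚ :=
  PowerSeries.mk fun n => (n : ℚ) * PowerSeries.coeff n f

/-- The normalized Eisenstein series `E₂ = 1 - 24 ∑ σ₁(n) qⁿ`. -/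
noncomputable def E2 : PowerSeries ℚ :=
  PowerSeries.mk fun n => if n = 0 then 1 else -24 * ∑ d ∈ n.divisors, (d : ℚ)

/-- The normalized Eisenstein series `E₄ = 1 + 240 ∑ σ₃(n) qⁿ`. -/
noncomputable def E4 : PowerSeries ℚ :=
  PowerSeries.mk fun n => if n = 0 then 1 else 240 * ∑ d ∈ n.divisors, (d : ℚ) ^ 3

/-- The normalized Eisenstein series `E₆ = 1 - 504 ∑ σ₅(n) qⁿ`. -/
noncomputable def E6 : PowerSeries ℚ :=
  PowerSeries.mk fun n => if n = 0 then 1 else -504 * ∑ d ∈ n.divisors, (d : ℚ) ^ 5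

/-- The discriminant `Δ = (E₄³ - E₆²)/1728`. -/
noncomputable def Δmf : PowerSeries ℚ := PowerSeries.C (1 / 1728 : ℚ) * (E4 ^ 3 - E6 ^ 2)

/-- The Serre derivative `∂ₖ = D - (k/12)E₂`. -/
noncomputable def serreD (k : ℚ) (f : PowerSeries ℚ) : PowerSeries ℚ :=
  Dq f - PowerSeries.C (k / 12) * E2 * f

/-- `L_w = ∂_{w-1}² - ((w²-1)/144)E₄`, with `∂_{w-1}² = ∂_{w+1} ∘ ∂_{w-1}`. -/
noncomputable def Lop (w : ℚ) (f : PowerSeries ℚ) : PowerSeries ℚ :=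
  serreD (w + 1) (serreD (w - 1) f) - PowerSeries.C ((w ^ 2 - 1) / 144) * E4 * f

/-- `K^up_w = E₄ ∂_{w-1} - ((w+1)/12) E₆`. -/
noncomputable def Kup (w : ℚ) (f : PowerSeries ℚ) : PowerSeries ℚ :=
  E4 * serreD (w - 1) f - PowerSeries.C ((w + 1) / 12) * E6 * f


lemma coeff_Dq (f : PowerSeries ℚ) (n : ℕ) : coeff n (Dq f) = n * coeff n f := coeff_mk _ _

lemma Dq_sub (f g : PowerSeries ℚ) : Dq (f - g) = Dq f - Dq g := by
  ext n; simp [coeff_Dq]; ring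

lemma Dq_C (c : ℚ) : Dq (C c) = 0 := by
  ext n
  simp [coeff_Dq, PowerSeries.coeff_C]
  rcases eq_or_ne n 0 with h | h <;> simp [h]

lemma Dq_mul (f g : PowerSeries ℚ) : Dq (f * g) = Dq f * g + f * Dq g := by
  ext n
  simp only [coeff_Dq, map_add, PowerSeries.coeff_mul, coeff_Dq, Finset.mul_sum,
    ← Finset.sum_add_distrib]
  apply Finset.sum_congr rfl
  intro p hp
  rw [Finset.HasAntidiagonal.mem_antidiagonal] at hp
  rw [← hp]
  push_cast
  ring

def quad (n : ℕ) : Finset ((ℕ × ℕ) × ℕ × ℕ) :=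
  ((Icc 1 n ×ˢ Icc 1 n) ×ˢ Icc 1 n ×ˢ Icc 1 n).filter
    fun p => p.1.1 * p.1.2 + p.2.1 * p.2.2 = n

lemma mem_quad {n : ℕ} {p : (ℕ × ℕ) × ℕ × ℕ} :
    p ∈ quad n ↔ 0 < p.1.1 ∧ 0 < p.1.2 ∧ 0 < p.2.1 ∧ 0 < p.2.2 ∧
      p.1.1 * p.1.2 + p.2.1 * p.2.2 = n := by
  obtain ⟨⟨a, x⟩, b, y⟩ := p
  simp only [quad, Finset.mem_filter, Finset.mem_product, Finset.mem_Icc]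
  constructor
  · rintro ⟨⟨⟨⟨ha, _⟩, _, _⟩, ⟨hb, _⟩, _, _⟩, h⟩
    exact ⟨ha, by omega, hb, by omega, h⟩
  · rintro ⟨ha, hx, hb, hy, h⟩
    have h1 : a ≤ a * x := Nat.le_mul_of_pos_right a hx
    have h2 : x ≤ a * x := Nat.le_mul_of_pos_left x ha
    have h3 : b ≤ b * y := Nat.le_mul_of_pos_right b hy
    have h4 : y ≤ b * y := Nat.le_mul_of_pos_left y hb
    omega

lemma swap_mem_quad {n : ℕ} {p : (ℕ × ℕ) × ℕ × ℕ} (hp : p ∈ quad n) : p.swap ∈ quad n := by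
  rw [mem_quad] at hp ⊢
  simp only [Prod.fst_swap, Prod.snd_swap]
  obtain ⟨h1, h2, h3, h4, h5⟩ := hp
  exact ⟨h3, h4, h1, h2, by omega⟩

/-- sum with a filter, re-expressed via swap -/
lemma quad_swap_filter (n : ℕ) (F : (ℕ × ℕ) × ℕ × ℕ → ℚ)
    (pr ps : (ℕ × ℕ) × ℕ × ℕ → Prop) [DecidablePred pr] [DecidablePred ps]
    (h : ∀ p, pr p ↔ ps p.swap) :
    ∑ p ∈ (quad n).filter pr, F p.swap = ∑ p ∈ (quad n).filter ps, F p := by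
  apply Finset.sum_nbij' (fun p => p.swap) (fun p => p.swap)
  · intro p hp
    rw [Finset.mem_filter] at hp ⊢
    exact ⟨swap_mem_quad hp.1, (h p).mp hp.2⟩
  · intro p hp
    rw [Finset.mem_filter] at hp ⊢
    refine ⟨swap_mem_quad hp.1, (h p.swap).mpr ?_⟩
    rw [Prod.swap_swap]
    exact hp.2
  · intro p _; exact Prod.swap_swap p
  · intro p _; exact Prod.swap_swap p
  · intro p _; rfl

/-- The key Liouville-type bijection:
`{(a,x,b,y) : ax+by=n, a<b}  ≃  {(a,x,b,y) : ax+by=n, y<x}` via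
`(a,x,b,y) ↦ (a, x+y, b-a, y)`. -/
lemma quad_key (n : ℕ) (F : (ℕ × ℕ) × ℕ × ℕ → ℚ) :
    ∑ p ∈ (quad n).filter (fun p => p.1.1 < p.2.1),
      F ((p.1.1, p.1.2 + p.2.2), p.2.1 - p.1.1, p.2.2)
    = ∑ p ∈ (quad n).filter (fun p => p.2.2 < p.1.2), F p := by
  apply Finset.sum_nbij' (fun p => ((p.1.1, p.1.2 + p.2.2), p.2.1 - p.1.1, p.2.2))
    (fun p => ((p.1.1, p.1.2 - p.2.2), p.2.1 + p.1.1, p.2.2))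
  · rintro ⟨⟨a, x⟩, b, y⟩ hp
    simp only [Finset.mem_filter, mem_quad] at hp ⊢
    obtain ⟨⟨ha, hx, hb, hy, he⟩, hab⟩ := hp
    have e1 : a * (x + y) + (b - a) * y = a * x + b * y := by
      rw [Nat.mul_add, Nat.sub_mul]
      have : a * y ≤ b * y := Nat.mul_le_mul_right y hab.le
      omega
    exact ⟨⟨ha, by omega, by omega, hy, by omega⟩, by omega⟩
  · rintro ⟨⟨a, x⟩, b, y⟩ hp
    simp only [Finset.mem_filter, mem_quad] at hp ⊢
    obtain ⟨⟨ha, hx, hb, hy, he⟩, hyx⟩ := hp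
    have e1 : a * (x - y) + (b + a) * y = a * x + b * y := by
      rw [Nat.mul_sub, Nat.add_mul]
      have : a * y ≤ a * x := Nat.mul_le_mul_left a hyx.le
      omega
    exact ⟨⟨ha, by omega, by omega, hy, by omega⟩, by omega⟩
  · rintro ⟨⟨a, x⟩, b, y⟩ hp
    simp only [Finset.mem_filter, mem_quad] at hp
    obtain ⟨⟨ha, hx, hb, hy, he⟩, hab⟩ := hp
    simp only [Prod.mk.injEq]
    exact ⟨⟨trivial, by omega⟩, by omega, trivial⟩
  · rintro ⟨⟨a, x⟩, b, y⟩ hp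
    simp only [Finset.mem_filter, mem_quad] at hp
    obtain ⟨⟨ha, hx, hb, hy, he⟩, hyx⟩ := hp
    simp only [Prod.mk.injEq]
    exact ⟨⟨trivial, by omega⟩, by omega, trivial⟩
  · intro p _; rfl

/-- diagonal `a = b` : `a(x+y) = n`. -/
lemma quad_diag_ab (n : ℕ) (g : ℕ → ℚ) :
    ∑ p ∈ (quad n).filter (fun p => p.1.1 = p.2.1), g p.1.1
    = ∑ d ∈ n.divisors, ((n / d : ℕ) - 1 : ℚ) * g d := by
  have step1 : ∑ p ∈ (quad n).filter (fun p => p.1.1 = p.2.1), g p.1.1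
      = ∑ q ∈ n.divisors.sigma (fun d => Ico 1 (n / d)), g q.1 := by
    apply Finset.sum_nbij' (fun p => (⟨p.1.1, p.1.2⟩ : Σ _ : ℕ, ℕ))
      (fun q => ((q.1, q.2), q.1, n / q.1 - q.2))
    · rintro ⟨⟨a, x⟩, b, y⟩ hp
      simp only [Finset.mem_filter, mem_quad] at hp
      obtain ⟨⟨ha, hx, hb, hy, he⟩, hab⟩ := hp
      subst hab
      have hd : a * (x + y) = n := by rw [Nat.mul_add]; omega
      have hdvd : a ∣ n := ⟨x + y, hd.symm⟩
      have hq : n / a = x + y := by rw [← hd, Nat.mul_div_cancel_left _ ha]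
      have hn0 : 0 < n := by
        have : 0 < a * (x + y) := Nat.mul_pos ha (by omega)
        omega
      simp only [Finset.mem_sigma, Nat.mem_divisors, Finset.mem_Ico]
      exact ⟨⟨hdvd, by omega⟩, by omega, by omega⟩
    · rintro ⟨d, x⟩ hq
      simp only [Finset.mem_sigma, Nat.mem_divisors, Finset.mem_Ico] at hq
      obtain ⟨⟨hdvd, hn⟩, hx1, hx2⟩ := hq
      have hd : 0 < d := Nat.pos_of_dvd_of_pos hdvd (Nat.pos_of_ne_zero hn)
      simp only [Finset.mem_filter, mem_quad]
      have he : d * x + d * (n / d - x) = n := by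
        rw [← Nat.mul_add]
        have : x + (n / d - x) = n / d := by omega
        rw [this, Nat.mul_div_cancel' hdvd]
      exact ⟨⟨hd, by omega, hd, by omega, he⟩, trivial⟩
    · rintro ⟨⟨a, x⟩, b, y⟩ hp
      simp only [Finset.mem_filter, mem_quad] at hp
      obtain ⟨⟨ha, hx, hb, hy, he⟩, hab⟩ := hp
      subst hab
      have hd : a * (x + y) = n := by rw [Nat.mul_add]; omega
      have hq : n / a = x + y := by rw [← hd, Nat.mul_div_cancel_left _ ha]
      simp only [Prod.mk.injEq, true_and, and_true]
      omega
    · rintro ⟨d, x⟩ _; rfl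
    · rintro p _; rfl
  rw [step1, Finset.sum_sigma]
  apply Finset.sum_congr rfl
  intro d hd
  simp only [Nat.mem_divisors] at hd
  have h1 : 1 ≤ n / d := (Nat.one_le_div_iff (Nat.pos_of_dvd_of_pos hd.1
    (Nat.pos_of_ne_zero hd.2))).mpr (Nat.le_of_dvd (Nat.pos_of_ne_zero hd.2) hd.1)
  have hc : ∀ s ∈ Ico 1 (n / d), g (⟨d, s⟩ : Σ _ : ℕ, ℕ).1 = g d := fun _ _ => rfl
  rw [Finset.sum_congr rfl hc, Finset.sum_const, Nat.card_Ico, nsmul_eq_mul]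
  congr 1
  push_cast [h1]
  ring

/-- diagonal `x = y` : `(a+b)x = n`. -/
lemma quad_diag_xy (n : ℕ) (g : ℕ → ℕ → ℚ) :
    ∑ p ∈ (quad n).filter (fun p => p.1.2 = p.2.2), g p.1.1 p.2.1
    = ∑ e ∈ n.divisors, ∑ a ∈ Ico 1 e, g a (e - a) := by
  have step1 : ∑ p ∈ (quad n).filter (fun p => p.1.2 = p.2.2), g p.1.1 p.2.1
      = ∑ q ∈ n.divisors.sigma (fun e => Ico 1 e), g q.2 (q.1 - q.2) := by
    apply Finset.sum_nbij' (fun p => (⟨p.1.1 + p.2.1, p.1.1⟩ : Σ _ : ℕ, ℕ))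
      (fun q => ((q.2, n / q.1), q.1 - q.2, n / q.1))
    · rintro ⟨⟨a, x⟩, b, y⟩ hp
      simp only [Finset.mem_filter, mem_quad] at hp
      obtain ⟨⟨ha, hx, hb, hy, he⟩, hxy⟩ := hp
      subst hxy
      have hd : (a + b) * x = n := by rw [Nat.add_mul]; omega
      have hn0 : 0 < n := by
        have : 0 < (a + b) * x := Nat.mul_pos (by omega) hx
        omega
      simp only [Finset.mem_sigma, Nat.mem_divisors, Finset.mem_Ico]
      exact ⟨⟨⟨x, hd.symm⟩, by omega⟩, by omega, by omega⟩
    · rintro ⟨e, a⟩ hq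
      simp only [Finset.mem_sigma, Nat.mem_divisors, Finset.mem_Ico] at hq
      obtain ⟨⟨hdvd, hn⟩, ha1, ha2⟩ := hq
      have he : 0 < e := by omega
      have hx : 0 < n / e := Nat.div_pos (Nat.le_of_dvd (Nat.pos_of_ne_zero hn) hdvd) he
      simp only [Finset.mem_filter, mem_quad]
      have heq : a * (n / e) + (e - a) * (n / e) = n := by
        rw [← Nat.add_mul]
        have h2 : a + (e - a) = e := by omega
        rw [h2, Nat.mul_div_cancel' hdvd]
      exact ⟨⟨by omega, hx, by omega, hx, heq⟩, trivial⟩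
    · rintro ⟨⟨a, x⟩, b, y⟩ hp
      simp only [Finset.mem_filter, mem_quad] at hp
      obtain ⟨⟨ha, hx, hb, hy, he⟩, hxy⟩ := hp
      subst hxy
      have hd : (a + b) * x = n := by rw [Nat.add_mul]; omega
      have hq : n / (a + b) = x := by rw [← hd, Nat.mul_div_cancel_left _ (by omega)]
      simp only [Prod.mk.injEq, true_and, and_true]
      omega
    · rintro ⟨e, a⟩ hq
      simp only [Finset.mem_sigma, Finset.mem_Ico] at hq
      have h : a + (e - a) = e := by omega
      rw [h]
    · intro p _
      have h : p.1.1 + p.2.1 - p.1.1 = p.2.1 := by omega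
      show g p.1.1 p.2.1 = g p.1.1 (p.1.1 + p.2.1 - p.1.1)
      rw [h]
  rw [step1, Finset.sum_sigma]

lemma quad_trichot (n : ℕ) (F : (ℕ × ℕ) × ℕ × ℕ → ℚ) (u v : (ℕ × ℕ) × ℕ × ℕ → ℕ) :
    ∑ p ∈ quad n, F p
      = ∑ p ∈ (quad n).filter (fun p => u p < v p), F p
        + ∑ p ∈ (quad n).filter (fun p => v p < u p), F p
        + ∑ p ∈ (quad n).filter (fun p => u p = v p), F p := by
  rw [← Finset.sum_filter_add_sum_filter_not (quad n) (fun p => u p < v p) F]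
  rw [← Finset.sum_filter_add_sum_filter_not ((quad n).filter (fun p => ¬ u p < v p))
    (fun p => v p < u p) F]
  rw [Finset.filter_filter, Finset.filter_filter]
  have e1 : (quad n).filter (fun a => ¬ u a < v a ∧ v a < u a)
      = (quad n).filter (fun p => v p < u p) := by
    apply Finset.filter_congr
    intro p _
    constructor
    · exact fun h => h.2
    · intro h; exact ⟨by omega, h⟩
  have e2 : (quad n).filter (fun a => ¬ u a < v a ∧ ¬ v a < u a)
      = (quad n).filter (fun p => u p = v p) := by
    apply Finset.filter_congr
    intro p _
    constructor
    · intro h; omega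
    · intro h; constructor <;> omega
  rw [e1, e2]
  ring

lemma master (n : ℕ) (Q Pf : ℕ → ℕ → ℚ)
    (hsym : ∀ a b, Q a b = Q b a)
    (heq : ∀ a b : ℕ, 0 < a → a < b → Q a (b - a) = Q a b + Pf a b + Pf b a) :
    2 * ∑ p ∈ quad n, Pf p.1.1 p.2.1
      = ∑ d ∈ n.divisors, ((n / d : ℕ) - 1 : ℚ) * Q d d
        + 2 * ∑ d ∈ n.divisors, ((n / d : ℕ) - 1 : ℚ) * Pf d d
        - ∑ e ∈ n.divisors, ∑ a ∈ Ico 1 e, Q a (e - a) := by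
  set Qab : (ℕ × ℕ) × ℕ × ℕ → ℚ := fun p => Q p.1.1 p.2.1 with hQab
  set Pab : (ℕ × ℕ) × ℕ × ℕ → ℚ := fun p => Pf p.1.1 p.2.1 with hPab
  -- the key identity
  have key : ∑ p ∈ (quad n).filter (fun p => p.1.1 < p.2.1), Q p.1.1 (p.2.1 - p.1.1)
      = ∑ p ∈ (quad n).filter (fun p => p.2.2 < p.1.2), Qab p := quad_key n Qab
  have key2 : ∑ p ∈ (quad n).filter (fun p => p.1.1 < p.2.1), Q p.1.1 (p.2.1 - p.1.1)
      = ∑ p ∈ (quad n).filter (fun p => p.1.1 < p.2.1),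
          (Qab p + Pf p.1.1 p.2.1 + Pf p.2.1 p.1.1) := by
    apply Finset.sum_congr rfl
    intro p hp
    simp only [Finset.mem_filter, mem_quad] at hp
    exact heq _ _ hp.1.1 hp.2
  -- swaps
  have swapP : ∑ p ∈ (quad n).filter (fun p => p.1.1 < p.2.1), Pf p.2.1 p.1.1
      = ∑ p ∈ (quad n).filter (fun p => p.2.1 < p.1.1), Pab p := by
    have := quad_swap_filter n Pab (fun p => p.1.1 < p.2.1) (fun p => p.2.1 < p.1.1)
      (fun p => by simp)
    simpa [hPab] using this
  have swapQx : ∑ p ∈ (quad n).filter (fun p => p.1.2 < p.2.2), Qab p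
      = ∑ p ∈ (quad n).filter (fun p => p.2.2 < p.1.2), Qab p := by
    have := quad_swap_filter n Qab (fun p => p.2.2 < p.1.2) (fun p => p.1.2 < p.2.2)
      (fun p => by simp)
    rw [← this]
    apply Finset.sum_congr rfl
    intro p _
    simp only [hQab, Prod.fst_swap, Prod.snd_swap]
    exact (hsym _ _)
  have swapQa : ∑ p ∈ (quad n).filter (fun p => p.1.1 < p.2.1), Qab p
      = ∑ p ∈ (quad n).filter (fun p => p.2.1 < p.1.1), Qab p := by
    have := quad_swap_filter n Qab (fun p => p.1.1 < p.2.1) (fun p => p.2.1 < p.1.1)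
      (fun p => by simp)
    rw [← this]
    apply Finset.sum_congr rfl
    intro p _
    simp only [hQab, Prod.fst_swap, Prod.snd_swap]
    exact (hsym _ _)
  -- diagonal values
  have diagQab : ∑ p ∈ (quad n).filter (fun p => p.1.1 = p.2.1), Qab p
      = ∑ d ∈ n.divisors, ((n / d : ℕ) - 1 : ℚ) * Q d d := by
    rw [← quad_diag_ab n (fun d => Q d d)]
    apply Finset.sum_congr rfl
    intro p hp
    simp only [Finset.mem_filter] at hp
    simp only [hQab, hp.2]
  have diagPab : ∑ p ∈ (quad n).filter (fun p => p.1.1 = p.2.1), Pab p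
      = ∑ d ∈ n.divisors, ((n / d : ℕ) - 1 : ℚ) * Pf d d := by
    rw [← quad_diag_ab n (fun d => Pf d d)]
    apply Finset.sum_congr rfl
    intro p hp
    simp only [Finset.mem_filter] at hp
    simp only [hPab, hp.2]
  have diagQxy : ∑ p ∈ (quad n).filter (fun p => p.1.2 = p.2.2), Qab p
      = ∑ e ∈ n.divisors, ∑ a ∈ Ico 1 e, Q a (e - a) := quad_diag_xy n Q
  -- splittings
  have splitP := quad_trichot n Pab (fun p => p.1.1) (fun p => p.2.1)
  have splitQa := quad_trichot n Qab (fun p => p.1.1) (fun p => p.2.1)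
  have splitQx := quad_trichot n Qab (fun p => p.1.2) (fun p => p.2.2)
  rw [Finset.sum_add_distrib, Finset.sum_add_distrib] at key2
  rw [swapP] at key2
  rw [key] at key2
  linarith [key2, splitP, splitQa, splitQx, swapQx, swapQa, diagQab, diagPab, diagQxy]

lemma psum1 (e : ℕ) : ∑ a ∈ Finset.range e, (a:ℚ) = (-1/2)*(e:ℚ) + (1/2)*(e:ℚ)^2 := by
  induction e with
  | zero => simp
  | succ m ih => rw [Finset.sum_range_succ, ih]; push_cast; ring

lemma psum2 (e : ℕ) : ∑ a ∈ Finset.range e, (a:ℚ)^2 = (1/6)*(e:ℚ) + (-1/2)*(e:ℚ)^2 + (1/3)*(e:ℚ)^3 := by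
  induction e with
  | zero => simp
  | succ m ih => rw [Finset.sum_range_succ, ih]; push_cast; ring

lemma psum3 (e : ℕ) : ∑ a ∈ Finset.range e, (a:ℚ)^3 = (1/4)*(e:ℚ)^2 + (-1/2)*(e:ℚ)^3 + (1/4)*(e:ℚ)^4 := by
  induction e with
  | zero => simp
  | succ m ih => rw [Finset.sum_range_succ, ih]; push_cast; ring

lemma psum4 (e : ℕ) : ∑ a ∈ Finset.range e, (a:ℚ)^4 = (-1/30)*(e:ℚ) + (1/3)*(e:ℚ)^3 + (-1/2)*(e:ℚ)^4 + (1/5)*(e:ℚ)^5 := by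
  induction e with
  | zero => simp
  | succ m ih => rw [Finset.sum_range_succ, ih]; push_cast; ring

lemma psum5 (e : ℕ) : ∑ a ∈ Finset.range e, (a:ℚ)^5 = (-1/12)*(e:ℚ)^2 + (5/12)*(e:ℚ)^4 + (-1/2)*(e:ℚ)^5 + (1/6)*(e:ℚ)^6 := by
  induction e with
  | zero => simp
  | succ m ih => rw [Finset.sum_range_succ, ih]; push_cast; ring

lemma psum6 (e : ℕ) : ∑ a ∈ Finset.range e, (a:ℚ)^6 = (1/42)*(e:ℚ) + (-1/6)*(e:ℚ)^3 + (1/2)*(e:ℚ)^5 + (-1/2)*(e:ℚ)^6 + (1/7)*(e:ℚ)^7 := by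
  induction e with
  | zero => simp
  | succ m ih => rw [Finset.sum_range_succ, ih]; push_cast; ring

lemma faul13 (e : ℕ) (he : 1 ≤ e) :
    ∑ a ∈ Finset.Ico 1 e, ((-1/4) * ((e - a : ℕ):ℚ)^4 + (-1/2) * (a:ℚ) * ((e - a : ℕ):ℚ)^3 + (-3/4) * (a:ℚ)^2 * ((e - a : ℕ):ℚ)^2 + (-1/2) * (a:ℚ)^3 * ((e - a : ℕ):ℚ) + (-1/4) * (a:ℚ)^4)
      = (1/120)*(e:ℚ) + (-1/12)*(e:ℚ)^3 + (1/4)*(e:ℚ)^4 + (-7/40)*(e:ℚ)^5 := by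
  have h0 : ∑ a ∈ Finset.range e, ((-1/4) * ((e - a : ℕ):ℚ)^4 + (-1/2) * (a:ℚ) * ((e - a : ℕ):ℚ)^3 + (-3/4) * (a:ℚ)^2 * ((e - a : ℕ):ℚ)^2 + (-1/2) * (a:ℚ)^3 * ((e - a : ℕ):ℚ) + (-1/4) * (a:ℚ)^4)
      = ((-1/4) * ((e - 0 : ℕ):ℚ)^4 + (-1/2) * ((0:ℕ):ℚ) * ((e - 0 : ℕ):ℚ)^3 + (-3/4) * ((0:ℕ):ℚ)^2 * ((e - 0 : ℕ):ℚ)^2 + (-1/2) * ((0:ℕ):ℚ)^3 * ((e - 0 : ℕ):ℚ) + (-1/4) * ((0:ℕ):ℚ)^4) + ∑ a ∈ Finset.Ico 1 e, ((-1/4) * ((e - a : ℕ):ℚ)^4 + (-1/2) * (a:ℚ) * ((e - a : ℕ):ℚ)^3 + (-3/4) * (a:ℚ)^2 * ((e - a : ℕ):ℚ)^2 + (-1/2) * (a:ℚ)^3 * ((e - a : ℕ):ℚ) + (-1/4) * (a:ℚ)^4) := by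
    rw [Finset.range_eq_Ico]
    exact Finset.sum_eq_sum_Ico_succ_bot (by omega) _
  have hmain : ∑ a ∈ Finset.range e, ((-1/4) * ((e - a : ℕ):ℚ)^4 + (-1/2) * (a:ℚ) * ((e - a : ℕ):ℚ)^3 + (-3/4) * (a:ℚ)^2 * ((e - a : ℕ):ℚ)^2 + (-1/2) * (a:ℚ)^3 * ((e - a : ℕ):ℚ) + (-1/4) * (a:ℚ)^4)
      = ∑ a ∈ Finset.range e, (((-1/4)*(e:ℚ)^4) + ((1/2)*(e:ℚ)^3) * (a:ℚ) + ((-3/4)*(e:ℚ)^2) * (a:ℚ)^2 + ((1/2)*(e:ℚ)) * (a:ℚ)^3 + ((-1/4)) * (a:ℚ)^4) := by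
    apply Finset.sum_congr rfl
    intro a ha
    rw [Finset.mem_range] at ha
    have hc : ((e - a : ℕ) : ℚ) = (e : ℚ) - (a : ℚ) := by
      rw [Nat.cast_sub ha.le]
    simp only [hc]
    ring
  have h2 : ∑ a ∈ Finset.Ico 1 e, ((-1/4) * ((e - a : ℕ):ℚ)^4 + (-1/2) * (a:ℚ) * ((e - a : ℕ):ℚ)^3 + (-3/4) * (a:ℚ)^2 * ((e - a : ℕ):ℚ)^2 + (-1/2) * (a:ℚ)^3 * ((e - a : ℕ):ℚ) + (-1/4) * (a:ℚ)^4)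
      = ∑ a ∈ Finset.range e, (((-1/4)*(e:ℚ)^4) + ((1/2)*(e:ℚ)^3) * (a:ℚ) + ((-3/4)*(e:ℚ)^2) * (a:ℚ)^2 + ((1/2)*(e:ℚ)) * (a:ℚ)^3 + ((-1/4)) * (a:ℚ)^4) - ((-1/4) * ((e - 0 : ℕ):ℚ)^4 + (-1/2) * ((0:ℕ):ℚ) * ((e - 0 : ℕ):ℚ)^3 + (-3/4) * ((0:ℕ):ℚ)^2 * ((e - 0 : ℕ):ℚ)^2 + (-1/2) * ((0:ℕ):ℚ)^3 * ((e - 0 : ℕ):ℚ) + (-1/4) * ((0:ℕ):ℚ)^4) := by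
    rw [← hmain, h0]; ring
  rw [h2]
  simp only [Finset.sum_add_distrib, ← Finset.mul_sum, Finset.sum_const, Finset.card_range,
    nsmul_eq_mul, psum1, psum2, psum3, psum4, psum5, psum6, Nat.sub_zero]
  push_cast
  ring

lemma faul15 (e : ℕ) (he : 1 ≤ e) :
    ∑ a ∈ Finset.Ico 1 e, ((-1/6) * ((e - a : ℕ):ℚ)^6 + (-1/2) * (a:ℚ) * ((e - a : ℕ):ℚ)^5 + (-5/12) * (a:ℚ)^2 * ((e - a : ℕ):ℚ)^4 + (-5/12) * (a:ℚ)^4 * ((e - a : ℕ):ℚ)^2 + (-1/2) * (a:ℚ)^5 * ((e - a : ℕ):ℚ) + (-1/6) * (a:ℚ)^6)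
      = (-1/252)*(e:ℚ) + (-1/12)*(e:ℚ)^5 + (1/6)*(e:ℚ)^6 + (-5/63)*(e:ℚ)^7 := by
  have h0 : ∑ a ∈ Finset.range e, ((-1/6) * ((e - a : ℕ):ℚ)^6 + (-1/2) * (a:ℚ) * ((e - a : ℕ):ℚ)^5 + (-5/12) * (a:ℚ)^2 * ((e - a : ℕ):ℚ)^4 + (-5/12) * (a:ℚ)^4 * ((e - a : ℕ):ℚ)^2 + (-1/2) * (a:ℚ)^5 * ((e - a : ℕ):ℚ) + (-1/6) * (a:ℚ)^6)
      = ((-1/6) * ((e - 0 : ℕ):ℚ)^6 + (-1/2) * ((0:ℕ):ℚ) * ((e - 0 : ℕ):ℚ)^5 + (-5/12) * ((0:ℕ):ℚ)^2 * ((e - 0 : ℕ):ℚ)^4 + (-5/12) * ((0:ℕ):ℚ)^4 * ((e - 0 : ℕ):ℚ)^2 + (-1/2) * ((0:ℕ):ℚ)^5 * ((e - 0 : ℕ):ℚ) + (-1/6) * ((0:ℕ):ℚ)^6) + ∑ a ∈ Finset.Ico 1 e, ((-1/6) * ((e - a : ℕ):ℚ)^6 + (-1/2) * (a:ℚ) *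 ((e - a : ℕ):ℚ)^5 + (-5/12) * (a:ℚ)^2 * ((e - a : ℕ):ℚ)^4 + (-5/12) * (a:ℚ)^4 * ((e - a : ℕ):ℚ)^2 + (-1/2) * (a:ℚ)^5 * ((e - a : ℕ):ℚ) + (-1/6) * (a:ℚ)^6) := by
    rw [Finset.range_eq_Ico]
    exact Finset.sum_eq_sum_Ico_succ_bot (by omega) _
  have hmain : ∑ a ∈ Finset.range e, ((-1/6) * ((e - a : ℕ):ℚ)^6 + (-1/2) * (a:ℚ) * ((e - a : ℕ):ℚ)^5 + (-5/12) * (a:ℚ)^2 * ((e - a : ℕ):ℚ)^4 + (-5/12) * (a:ℚ)^4 * ((e - a : ℕ):ℚ)^2 + (-1/2) * (a:ℚ)^5 * ((e - a : ℕ):ℚ) + (-1/6) * (a:ℚ)^6)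
      = ∑ a ∈ Finset.range e, (((-1/6)*(e:ℚ)^6) + ((1/2)*(e:ℚ)^5) * (a:ℚ) + ((-5/12)*(e:ℚ)^4) * (a:ℚ)^2 + ((-5/12)*(e:ℚ)^2) * (a:ℚ)^4 + ((1/2)*(e:ℚ)) * (a:ℚ)^5 + ((-1/6)) * (a:ℚ)^6) := by
    apply Finset.sum_congr rfl
    intro a ha
    rw [Finset.mem_range] at ha
    have hc : ((e - a : ℕ) : ℚ) = (e : ℚ) - (a : ℚ) := by
      rw [Nat.cast_sub ha.le]
    simp only [hc]
    ring
  have h2 : ∑ a ∈ Finset.Ico 1 e, ((-1/6) * ((e - a : ℕ):ℚ)^6 + (-1/2) * (a:ℚ) * ((e - a : ℕ):ℚ)^5 + (-5/12) * (a:ℚ)^2 * ((e - a : ℕ):ℚ)^4 + (-5/12) * (a:ℚ)^4 * ((e - a : ℕ):ℚ)^2 + (-1/2) * (a:ℚ)^5 * ((e - a : ℕ):ℚ) + (-1/6) * (a:ℚ)^6)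
      = ∑ a ∈ Finset.range e, (((-1/6)*(e:ℚ)^6) + ((1/2)*(e:ℚ)^5) * (a:ℚ) + ((-5/12)*(e:ℚ)^4) * (a:ℚ)^2 + ((-5/12)*(e:ℚ)^2) * (a:ℚ)^4 + ((1/2)*(e:ℚ)) * (a:ℚ)^5 + ((-1/6)) * (a:ℚ)^6) - ((-1/6) * ((e - 0 : ℕ):ℚ)^6 + (-1/2) * ((0:ℕ):ℚ) * ((e - 0 : ℕ):ℚ)^5 + (-5/12) * ((0:ℕ):ℚ)^2 * ((e - 0 : ℕ):ℚ)^4 + (-5/12) * ((0:ℕ):ℚ)^4 * ((e - 0 : ℕ):ℚ)^2 + (-1/2) * ((0:ℕ):ℚ)^5 * ((e - 0 : ℕ):ℚ) + (-1/6) * ((0:ℕ):ℚ)^6) := by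
    rw [← hmain, h0]; ring
  rw [h2]
  simp only [Finset.sum_add_distrib, ← Finset.mul_sum, Finset.sum_const, Finset.card_range,
    nsmul_eq_mul, psum1, psum2, psum3, psum4, psum5, psum6, Nat.sub_zero]
  push_cast
  ring

lemma faul33 (e : ℕ) (he : 1 ≤ e) :
    ∑ a ∈ Finset.Ico 1 e, ((-1/2) * (a:ℚ)^2 * ((e - a : ℕ):ℚ)^4 + (-1) * (a:ℚ)^3 * ((e - a : ℕ):ℚ)^3 + (-1/2) * (a:ℚ)^4 * ((e - a : ℕ):ℚ)^2)
      = (1/60)*(e:ℚ)^3 + (-1/60)*(e:ℚ)^7 := by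
  have h0 : ∑ a ∈ Finset.range e, ((-1/2) * (a:ℚ)^2 * ((e - a : ℕ):ℚ)^4 + (-1) * (a:ℚ)^3 * ((e - a : ℕ):ℚ)^3 + (-1/2) * (a:ℚ)^4 * ((e - a : ℕ):ℚ)^2)
      = ((-1/2) * ((0:ℕ):ℚ)^2 * ((e - 0 : ℕ):ℚ)^4 + (-1) * ((0:ℕ):ℚ)^3 * ((e - 0 : ℕ):ℚ)^3 + (-1/2) * ((0:ℕ):ℚ)^4 * ((e - 0 : ℕ):ℚ)^2) + ∑ a ∈ Finset.Ico 1 e, ((-1/2) * (a:ℚ)^2 * ((e - a : ℕ):ℚ)^4 + (-1) * (a:ℚ)^3 * ((e - a : ℕ):ℚ)^3 + (-1/2) * (a:ℚ)^4 * ((e - a : ℕ):ℚ)^2) := by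
    rw [Finset.range_eq_Ico]
    exact Finset.sum_eq_sum_Ico_succ_bot (by omega) _
  have hmain : ∑ a ∈ Finset.range e, ((-1/2) * (a:ℚ)^2 * ((e - a : ℕ):ℚ)^4 + (-1) * (a:ℚ)^3 * ((e - a : ℕ):ℚ)^3 + (-1/2) * (a:ℚ)^4 * ((e - a : ℕ):ℚ)^2)
      = ∑ a ∈ Finset.range e, (((-1/2)*(e:ℚ)^4) * (a:ℚ)^2 + ((1)*(e:ℚ)^3) * (a:ℚ)^3 + ((-1/2)*(e:ℚ)^2) * (a:ℚ)^4) := by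
    apply Finset.sum_congr rfl
    intro a ha
    rw [Finset.mem_range] at ha
    have hc : ((e - a : ℕ) : ℚ) = (e : ℚ) - (a : ℚ) := by
      rw [Nat.cast_sub ha.le]
    simp only [hc]
    ring
  have h2 : ∑ a ∈ Finset.Ico 1 e, ((-1/2) * (a:ℚ)^2 * ((e - a : ℕ):ℚ)^4 + (-1) * (a:ℚ)^3 * ((e - a : ℕ):ℚ)^3 + (-1/2) * (a:ℚ)^4 * ((e - a : ℕ):ℚ)^2)
      = ∑ a ∈ Finset.range e, (((-1/2)*(e:ℚ)^4) * (a:ℚ)^2 + ((1)*(e:ℚ)^3) * (a:ℚ)^3 + ((-1/2)*(e:ℚ)^2) * (a:ℚ)^4) - ((-1/2) * ((0:ℕ):ℚ)^2 * ((e - 0 : ℕ):ℚ)^4 + (-1) * ((0:ℕ):ℚ)^3 * ((e - 0 : ℕ):ℚ)^3 + (-1/2) * ((0:ℕ):ℚ)^4 * ((e - 0 : ℕ):ℚ)^2) := by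
    rw [← hmain, h0]; ring
  rw [h2]
  simp only [Finset.sum_add_distrib, ← Finset.mul_sum, Finset.sum_const, Finset.card_range,
    nsmul_eq_mul, psum1, psum2, psum3, psum4, psum5, psum6, Nat.sub_zero]
  push_cast
  ring

lemma ndiv4 (n : ℕ) : ∑ d ∈ n.divisors, ((n/d : ℕ):ℚ) * (d:ℚ)^4
    = (n:ℚ) * ∑ d ∈ n.divisors, (d:ℚ)^3 := by
  rw [Finset.mul_sum]
  apply Finset.sum_congr rfl
  intro d hd
  rw [Nat.mem_divisors] at hd
  have hd0 : 0 < d := Nat.pos_of_dvd_of_pos hd.1 (Nat.pos_of_ne_zero hd.2)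
  have hdq : ((d:ℚ)) ≠ 0 := by exact_mod_cast hd0.ne'
  rw [Nat.cast_div hd.1 hdq]
  field_simp

lemma ndiv6 (n : ℕ) : ∑ d ∈ n.divisors, ((n/d : ℕ):ℚ) * (d:ℚ)^6
    = (n:ℚ) * ∑ d ∈ n.divisors, (d:ℚ)^5 := by
  rw [Finset.mul_sum]
  apply Finset.sum_congr rfl
  intro d hd
  rw [Nat.mem_divisors] at hd
  have hd0 : 0 < d := Nat.pos_of_dvd_of_pos hd.1 (Nat.pos_of_ne_zero hd.2)
  have hdq : ((d:ℚ)) ≠ 0 := by exact_mod_cast hd0.ne'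
  rw [Nat.cast_div hd.1 hdq]
  field_simp

lemma convW13 (n : ℕ) :
    240 * ∑ p ∈ quad n, (p.1.1 : ℚ) * (p.2.1 : ℚ)^3
      = -30*(n:ℚ)*(∑ d ∈ n.divisors, (d:ℚ)^3) - (∑ d ∈ n.divisors, (d:ℚ))
        + 10*(∑ d ∈ n.divisors, (d:ℚ)^3) + 21*(∑ d ∈ n.divisors, (d:ℚ)^5) := by
  have hm := master n
    (fun a b => (-1/4) * ((b:ℕ):ℚ)^4 + (-1/2) * ((a:ℕ):ℚ) * ((b:ℕ):ℚ)^3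
      + (-3/4) * ((a:ℕ):ℚ)^2 * ((b:ℕ):ℚ)^2 + (-1/2) * ((a:ℕ):ℚ)^3 * ((b:ℕ):ℚ)
      + (-1/4) * ((a:ℕ):ℚ)^4)
    (fun a b => ((a:ℕ):ℚ) * ((b:ℕ):ℚ)^3)
    (fun a b => by ring)
    (fun a b ha hab => by
      rw [Nat.cast_sub hab.le]
      ring)
  have hC : ∑ e ∈ n.divisors, ∑ a ∈ Finset.Ico 1 e,
        ((-1/4) * ((e - a : ℕ):ℚ)^4 + (-1/2) * ((a:ℕ):ℚ) * ((e - a : ℕ):ℚ)^3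
          + (-3/4) * ((a:ℕ):ℚ)^2 * ((e - a : ℕ):ℚ)^2 + (-1/2) * ((a:ℕ):ℚ)^3 * ((e - a : ℕ):ℚ)
          + (-1/4) * ((a:ℕ):ℚ)^4)
      = ∑ e ∈ n.divisors,
          ((1/120)*(e:ℚ) + (-1/12)*(e:ℚ)^3 + (1/4)*(e:ℚ)^4 + (-7/40)*(e:ℚ)^5) := by
    apply Finset.sum_congr rfl
    intro e he
    exact faul13 e (Nat.pos_of_mem_divisors he)
  rw [hC] at hm
  have hQd : ∑ d ∈ n.divisors, (((n / d : ℕ):ℚ) - 1) *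
        ((-1/4) * ((d:ℕ):ℚ)^4 + (-1/2) * ((d:ℕ):ℚ) * ((d:ℕ):ℚ)^3
          + (-3/4) * ((d:ℕ):ℚ)^2 * ((d:ℕ):ℚ)^2 + (-1/2) * ((d:ℕ):ℚ)^3 * ((d:ℕ):ℚ)
          + (-1/4) * ((d:ℕ):ℚ)^4)
      = (-9/4) * ((n:ℚ) * ∑ d ∈ n.divisors, (d:ℚ)^3) + (9/4) * ∑ d ∈ n.divisors, (d:ℚ)^4 := by
    rw [← ndiv4, Finset.mul_sum, Finset.mul_sum, ← Finset.sum_add_distrib]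
    apply Finset.sum_congr rfl
    intro d _
    ring
  have hPd : ∑ d ∈ n.divisors, (((n / d : ℕ):ℚ) - 1) * (((d:ℕ):ℚ) * ((d:ℕ):ℚ)^3)
      = ((n:ℚ) * ∑ d ∈ n.divisors, (d:ℚ)^3) - ∑ d ∈ n.divisors, (d:ℚ)^4 := by
    rw [← ndiv4, ← Finset.sum_sub_distrib]
    apply Finset.sum_congr rfl
    intro d _
    ring
  rw [hQd, hPd, Finset.sum_add_distrib, Finset.sum_add_distrib, Finset.sum_add_distrib,
    ← Finset.mul_sum, ← Finset.mul_sum, ← Finset.mul_sum, ← Finset.mul_sum] at hm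
  linarith [hm]

lemma convW15 (n : ℕ) :
    504 * ∑ p ∈ quad n, (p.1.1 : ℚ) * (p.2.1 : ℚ)^5
      = -42*(n:ℚ)*(∑ d ∈ n.divisors, (d:ℚ)^5) + (∑ d ∈ n.divisors, (d:ℚ))
        + 21*(∑ d ∈ n.divisors, (d:ℚ)^5) + 20*(∑ d ∈ n.divisors, (d:ℚ)^7) := by
  have hm := master n
    (fun a b => (-1/6) * ((b:ℕ):ℚ)^6 + (-1/2) * ((a:ℕ):ℚ) * ((b:ℕ):ℚ)^5
      + (-5/12) * ((a:ℕ):ℚ)^2 * ((b:ℕ):ℚ)^4 + (-5/12) * ((a:ℕ):ℚ)^4 * ((b:ℕ):ℚ)^2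
      + (-1/2) * ((a:ℕ):ℚ)^5 * ((b:ℕ):ℚ) + (-1/6) * ((a:ℕ):ℚ)^6)
    (fun a b => ((a:ℕ):ℚ) * ((b:ℕ):ℚ)^5)
    (fun a b => by ring)
    (fun a b ha hab => by
      rw [Nat.cast_sub hab.le]
      ring)
  have hC : ∑ e ∈ n.divisors, ∑ a ∈ Finset.Ico 1 e,
        ((-1/6) * ((e - a : ℕ):ℚ)^6 + (-1/2) * ((a:ℕ):ℚ) * ((e - a : ℕ):ℚ)^5
          + (-5/12) * ((a:ℕ):ℚ)^2 * ((e - a : ℕ):ℚ)^4 + (-5/12) * ((a:ℕ):ℚ)^4 * ((e - a : ℕ):ℚ)^2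
          + (-1/2) * ((a:ℕ):ℚ)^5 * ((e - a : ℕ):ℚ) + (-1/6) * ((a:ℕ):ℚ)^6)
      = ∑ e ∈ n.divisors,
          ((-1/252)*(e:ℚ) + (-1/12)*(e:ℚ)^5 + (1/6)*(e:ℚ)^6 + (-5/63)*(e:ℚ)^7) := by
    apply Finset.sum_congr rfl
    intro e he
    exact faul15 e (Nat.pos_of_mem_divisors he)
  rw [hC] at hm
  have hQd : ∑ d ∈ n.divisors, (((n / d : ℕ):ℚ) - 1) *
        ((-1/6) * ((d:ℕ):ℚ)^6 + (-1/2) * ((d:ℕ):ℚ) * ((d:ℕ):ℚ)^5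
          + (-5/12) * ((d:ℕ):ℚ)^2 * ((d:ℕ):ℚ)^4 + (-5/12) * ((d:ℕ):ℚ)^4 * ((d:ℕ):ℚ)^2
          + (-1/2) * ((d:ℕ):ℚ)^5 * ((d:ℕ):ℚ) + (-1/6) * ((d:ℕ):ℚ)^6)
      = (-13/6) * ((n:ℚ) * ∑ d ∈ n.divisors, (d:ℚ)^5) + (13/6) * ∑ d ∈ n.divisors, (d:ℚ)^6 := by
    rw [← ndiv6, Finset.mul_sum, Finset.mul_sum, ← Finset.sum_add_distrib]
    apply Finset.sum_congr rfl
    intro d _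
    ring
  have hPd : ∑ d ∈ n.divisors, (((n / d : ℕ):ℚ) - 1) * (((d:ℕ):ℚ) * ((d:ℕ):ℚ)^5)
      = ((n:ℚ) * ∑ d ∈ n.divisors, (d:ℚ)^5) - ∑ d ∈ n.divisors, (d:ℚ)^6 := by
    rw [← ndiv6, ← Finset.sum_sub_distrib]
    apply Finset.sum_congr rfl
    intro d _
    ring
  rw [hQd, hPd, Finset.sum_add_distrib, Finset.sum_add_distrib, Finset.sum_add_distrib,
    ← Finset.mul_sum, ← Finset.mul_sum, ← Finset.mul_sum, ← Finset.mul_sum] at hm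
  linarith [hm]

lemma convW33 (n : ℕ) :
    120 * ∑ p ∈ quad n, (p.1.1 : ℚ)^3 * (p.2.1 : ℚ)^3
      = (∑ d ∈ n.divisors, (d:ℚ)^7) - (∑ d ∈ n.divisors, (d:ℚ)^3) := by
  have hm := master n
    (fun a b => (-1/2) * ((a:ℕ):ℚ)^2 * ((b:ℕ):ℚ)^4 + (-1) * ((a:ℕ):ℚ)^3 * ((b:ℕ):ℚ)^3
      + (-1/2) * ((a:ℕ):ℚ)^4 * ((b:ℕ):ℚ)^2)
    (fun a b => ((a:ℕ):ℚ)^3 * ((b:ℕ):ℚ)^3)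
    (fun a b => by ring)
    (fun a b ha hab => by
      rw [Nat.cast_sub hab.le]
      ring)
  have hC : ∑ e ∈ n.divisors, ∑ a ∈ Finset.Ico 1 e,
        ((-1/2) * ((a:ℕ):ℚ)^2 * ((e - a : ℕ):ℚ)^4 + (-1) * ((a:ℕ):ℚ)^3 * ((e - a : ℕ):ℚ)^3
          + (-1/2) * ((a:ℕ):ℚ)^4 * ((e - a : ℕ):ℚ)^2)
      = ∑ e ∈ n.divisors, ((1/60)*(e:ℚ)^3 + (-1/60)*(e:ℚ)^7) := by
    apply Finset.sum_congr rfl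
    intro e he
    exact faul33 e (Nat.pos_of_mem_divisors he)
  rw [hC] at hm
  have hQd : ∑ d ∈ n.divisors, (((n / d : ℕ):ℚ) - 1) *
        ((-1/2) * ((d:ℕ):ℚ)^2 * ((d:ℕ):ℚ)^4 + (-1) * ((d:ℕ):ℚ)^3 * ((d:ℕ):ℚ)^3
          + (-1/2) * ((d:ℕ):ℚ)^4 * ((d:ℕ):ℚ)^2)
      = (-2) * ((n:ℚ) * ∑ d ∈ n.divisors, (d:ℚ)^5) + 2 * ∑ d ∈ n.divisors, (d:ℚ)^6 := by
    rw [← ndiv6, Finset.mul_sum, Finset.mul_sum, ← Finset.sum_add_distrib]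
    apply Finset.sum_congr rfl
    intro d _
    ring
  have hPd : ∑ d ∈ n.divisors, (((n / d : ℕ):ℚ) - 1) * (((d:ℕ):ℚ)^3 * ((d:ℕ):ℚ)^3)
      = ((n:ℚ) * ∑ d ∈ n.divisors, (d:ℚ)^5) - ∑ d ∈ n.divisors, (d:ℚ)^6 := by
    rw [← ndiv6, ← Finset.sum_sub_distrib]
    apply Finset.sum_congr rfl
    intro d _
    ring
  rw [hQd, hPd, Finset.sum_add_distrib, ← Finset.mul_sum, ← Finset.mul_sum] at hm
  linarith [hm]

lemma conv_quad (n : ℕ) (F G : ℕ → ℚ) :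
    ∑ k ∈ Finset.Ico 1 n, (∑ a ∈ k.divisors, F a) * (∑ b ∈ (n - k).divisors, G b)
      = ∑ p ∈ quad n, F p.1.1 * G p.2.1 := by
  have hmaps : ∀ p ∈ quad n, p.1.1 * p.1.2 ∈ Finset.Ico 1 n := by
    rintro ⟨⟨a, x⟩, b, y⟩ hp
    simp only [mem_quad] at hp
    obtain ⟨ha, hx, hb, hy, he⟩ := hp
    have h1 : 1 ≤ a * x := Nat.mul_pos ha hx
    have h2 : 1 ≤ b * y := Nat.mul_pos hb hy
    show a * x ∈ Finset.Ico 1 n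
    rw [Finset.mem_Ico]
    omega
  rw [← Finset.sum_fiberwise_of_maps_to hmaps (fun p => F p.1.1 * G p.2.1)]
  apply Finset.sum_congr rfl
  intro k hk
  rw [Finset.mem_Ico] at hk
  rw [Finset.sum_mul_sum, ← Finset.sum_product']
  apply Finset.sum_nbij' (fun q => ((q.1, k / q.1), q.2, (n - k) / q.2))
    (fun p => ((p.1.1, p.2.1) : ℕ × ℕ))
  · rintro ⟨a, b⟩ hq
    simp only [Finset.mem_product, Nat.mem_divisors] at hq
    obtain ⟨⟨hak, hk0⟩, hbn, hn0⟩ := hq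
    have ha : 0 < a := Nat.pos_of_dvd_of_pos hak (Nat.pos_of_ne_zero hk0)
    have hb : 0 < b := Nat.pos_of_dvd_of_pos hbn (Nat.pos_of_ne_zero hn0)
    have e1 : a * (k / a) = k := Nat.mul_div_cancel' hak
    have e2 : b * ((n - k) / b) = n - k := Nat.mul_div_cancel' hbn
    simp only [Finset.mem_filter, mem_quad]
    refine ⟨⟨ha, ?_, hb, ?_, by omega⟩, e1⟩
    · have := Nat.div_pos (Nat.le_of_dvd (Nat.pos_of_ne_zero hk0) hak) ha
      omega
    · have := Nat.div_pos (Nat.le_of_dvd (Nat.pos_of_ne_zero hn0) hbn) hb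
      omega
  · rintro ⟨⟨a, x⟩, b, y⟩ hp
    simp only [Finset.mem_filter, mem_quad] at hp
    obtain ⟨⟨ha, hx, hb, hy, he⟩, hax⟩ := hp
    simp only [Finset.mem_product, Nat.mem_divisors]
    have hby : b * y = n - k := by omega
    exact ⟨⟨⟨x, hax.symm⟩, by omega⟩, ⟨y, hby.symm⟩, by omega⟩
  · rintro ⟨a, b⟩ _; rfl
  · rintro ⟨⟨a, x⟩, b, y⟩ hp
    simp only [Finset.mem_filter, mem_quad] at hp
    obtain ⟨⟨ha, hx, hb, hy, he⟩, hax⟩ := hp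
    have hby : b * y = n - k := by omega
    have e1 : k / a = x := by rw [← hax, Nat.mul_div_cancel_left _ ha]
    have e2 : (n - k) / b = y := by rw [← hby, Nat.mul_div_cancel_left _ hb]
    simp only [Prod.mk.injEq, true_and, and_true]
    exact ⟨e1, e2⟩
  · rintro ⟨a, b⟩ _; rfl

lemma ram4 : (3 : PowerSeries ℚ) * Dq E4 = E2 * E4 - E6 := by
  have h3 : (3 : PowerSeries ℚ) = C 3 := (map_ofNat _ 3).symm
  ext n
  rw [h3, map_sub, PowerSeries.coeff_C_mul, coeff_Dq, PowerSeries.coeff_mul]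
  rcases Nat.eq_zero_or_pos n with hn | hn
  · subst hn
    simp [E2, E4, E6, coeff_mk]
  have hne : n ≠ 0 := hn.ne'
  rw [Finset.Nat.sum_antidiagonal_eq_sum_range_succ
    (f := fun i j => coeff i E2 * coeff j E4), Finset.sum_range_succ,
    Finset.range_eq_Ico, Finset.sum_eq_sum_Ico_succ_bot hn]
  have hmid : ∑ k ∈ Finset.Ico (0+1) n, coeff k E2 * coeff (n - k) E4
      = -5760 * ∑ p ∈ quad n, (p.1.1 : ℚ) * (p.2.1 : ℚ)^3 := by
    rw [← conv_quad n (fun a => (a:ℚ)) (fun b => (b:ℚ)^3), Finset.mul_sum]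
    apply Finset.sum_congr (by norm_num)
    intro k hk
    rw [Finset.mem_Ico] at hk
    have hk0 : k ≠ 0 := by omega
    have hnk : n - k ≠ 0 := by omega
    rw [E2, E4, coeff_mk, coeff_mk, if_neg hk0, if_neg hnk]
    ring
  rw [hmid]
  have h0 : coeff 0 E2 * coeff (n - 0) E4 = 240 * ∑ d ∈ n.divisors, (d:ℚ)^3 := by
    rw [E2, E4, coeff_mk, coeff_mk, if_pos rfl, Nat.sub_zero, if_neg hne]
    ring
  have hn0 : coeff n E2 * coeff (n - n) E4 = -24 * ∑ d ∈ n.divisors, (d:ℚ) := by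
    rw [E2, E4, coeff_mk, coeff_mk, if_neg hne, Nat.sub_self, if_pos rfl]
    ring
  rw [h0, hn0, E4, E6, coeff_mk, coeff_mk, if_neg hne, if_neg hne]
  have hconv := convW13 n
  linarith [hconv]

lemma ram6 : (2 : PowerSeries ℚ) * Dq E6 = E2 * E6 - E4^2 := by
  have h2 : (2 : PowerSeries ℚ) = C 2 := (map_ofNat _ 2).symm
  ext n
  rw [h2, map_sub, PowerSeries.coeff_C_mul, coeff_Dq, sq, PowerSeries.coeff_mul,
    PowerSeries.coeff_mul]
  rcases Nat.eq_zero_or_pos n with hn | hn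
  · subst hn
    simp [E2, E4, E6, coeff_mk]
  have hne : n ≠ 0 := hn.ne'
  rw [Finset.Nat.sum_antidiagonal_eq_sum_range_succ
    (f := fun i j => coeff i E2 * coeff j E6), Finset.sum_range_succ,
    Finset.range_eq_Ico, Finset.sum_eq_sum_Ico_succ_bot hn,
    Finset.Nat.sum_antidiagonal_eq_sum_range_succ
    (f := fun i j => coeff i E4 * coeff j E4), Finset.sum_range_succ,
    Finset.range_eq_Ico, Finset.sum_eq_sum_Ico_succ_bot hn]
  have hmid1 : ∑ k ∈ Finset.Ico (0+1) n, coeff k E2 * coeff (n - k) E6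
      = 12096 * ∑ p ∈ quad n, (p.1.1 : ℚ) * (p.2.1 : ℚ)^5 := by
    rw [← conv_quad n (fun a => (a:ℚ)) (fun b => (b:ℚ)^5), Finset.mul_sum]
    apply Finset.sum_congr (by norm_num)
    intro k hk
    rw [Finset.mem_Ico] at hk
    have hk0 : k ≠ 0 := by omega
    have hnk : n - k ≠ 0 := by omega
    rw [E2, E6, coeff_mk, coeff_mk, if_neg hk0, if_neg hnk]
    ring
  have hmid2 : ∑ k ∈ Finset.Ico (0+1) n, coeff k E4 * coeff (n - k) E4
      = 57600 * ∑ p ∈ quad n, (p.1.1 : ℚ)^3 * (p.2.1 : ℚ)^3 := by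
    rw [← conv_quad n (fun a => (a:ℚ)^3) (fun b => (b:ℚ)^3), Finset.mul_sum]
    apply Finset.sum_congr (by norm_num)
    intro k hk
    rw [Finset.mem_Ico] at hk
    have hk0 : k ≠ 0 := by omega
    have hnk : n - k ≠ 0 := by omega
    rw [E4, coeff_mk, coeff_mk, if_neg hk0, if_neg hnk]
    ring
  rw [hmid1, hmid2]
  have h0a : coeff 0 E2 * coeff (n - 0) E6 = -504 * ∑ d ∈ n.divisors, (d:ℚ)^5 := by
    rw [E2, E6, coeff_mk, coeff_mk, if_pos rfl, Nat.sub_zero, if_neg hne]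
    ring
  have hna : coeff n E2 * coeff (n - n) E6 = -24 * ∑ d ∈ n.divisors, (d:ℚ) := by
    rw [E2, E6, coeff_mk, coeff_mk, if_neg hne, Nat.sub_self, if_pos rfl]
    ring
  have h0b : coeff 0 E4 * coeff (n - 0) E4 = 240 * ∑ d ∈ n.divisors, (d:ℚ)^3 := by
    rw [E4, coeff_mk, coeff_mk, if_pos rfl, Nat.sub_zero, if_neg hne]
    ring
  have hnb : coeff n E4 * coeff (n - n) E4 = 240 * ∑ d ∈ n.divisors, (d:ℚ)^3 := by
    rw [E4, coeff_mk, coeff_mk, if_neg hne, Nat.sub_self, if_pos rfl]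
    ring
  rw [h0a, hna, h0b, hnb, E6, coeff_mk, if_neg hne]
  have hc15 := convW15 n
  have hc33 := convW33 n
  linarith [hc15, hc33]


/-- The operator identity
`K^up_{w+6} ∘ K^up_w = E₄² L_w - ((w+6)/6) E₆ K^up_w + 12(w+1)(w+5) Δ`. -/
theorem Kup_comp_Kup (w : ℚ) (f : PowerSeries ℚ) :
    Kup (w + 6) (Kup w f) =
      E4 ^ 2 * Lop w f - PowerSeries.C ((w + 6) / 6) * (E6 * Kup w f) +
        PowerSeries.C (12 * (w + 1) * (w + 5)) * (Δmf * f) := by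
  classical
  have t_def : True := trivial
  have h1 : C ((w - 1) / 12) = (C w - 1) * C (1/12) := by
    rw [show (w - 1) / 12 = (w - 1) * (1/12) by ring]
    simp only [map_mul, map_sub, map_one]
  have h2 : C ((w + 1) / 12) = (C w + 1) * C (1/12) := by
    rw [show (w + 1) / 12 = (w + 1) * (1/12) by ring]
    simp only [map_mul, map_add, map_one]
  have h3 : C ((w + 6 - 1) / 12) = (C w + 5) * C (1/12) := by
    rw [show (w + 6 - 1) / 12 = (w + 5) * (1/12) by ring]
    simp only [map_mul, map_add, map_ofNat]
  have h4 : C ((w + 6 + 1) / 12) = (C w + 7) * C (1/12) := by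
    rw [show (w + 6 + 1) / 12 = (w + 7) * (1/12) by ring]
    simp only [map_mul, map_add, map_ofNat]
  have h5 : C ((w + 6) / 6) = (2 * C w + 12) * C (1/12) := by
    rw [show (w + 6) / 6 = (2 * w + 12) * (1/12) by ring]
    simp only [map_mul, map_add, map_ofNat]
  have h6 : C ((w ^ 2 - 1) / 144) = (C w ^ 2 - 1) * C (1/12) ^ 2 := by
    rw [show (w ^ 2 - 1) / 144 = (w ^ 2 - 1) * (1/12) ^ 2 by ring]
    simp only [map_mul, map_sub, map_one, map_pow]
  have h7 : C (12 * (w + 1) * (w + 5)) = 12 * (C w + 1) * (C w + 5) := by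
    simp only [map_mul, map_add, map_one, map_ofNat]
  have h8 : C (1 / 1728 : ℚ) = C (1/12) ^ 3 := by
    rw [show (1/1728 : ℚ) = (1/12) ^ 3 by norm_num, map_pow]
  have ht : (12 : PowerSeries ℚ) * C (1/12) = 1 := by
    rw [show ((12 : PowerSeries ℚ)) = C 12 from (map_ofNat _ 12).symm, ← map_mul]
    norm_num
  have hE4 := ram4
  have hE6 := ram6
  have h6ne : (6 : PowerSeries ℚ) ≠ 0 := by
    intro h
    have := congrArg (PowerSeries.constantCoeff) h
    rw [map_ofNat] at this
    norm_num at this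
  apply mul_left_cancel₀ h6ne
  simp only [Kup, Lop, serreD, Δmf, Dq_sub, Dq_mul, Dq_C, zero_mul]
  linear_combination
    (6 * (-(E2*E4*f*(Dq E4)) - E2*E4*E6*f*(C ((w + 6) / 6)) + E2*E4*E6*f*(C ((w + 6 + 1) / 12))
      + E2^2*E4^2*f*(C ((w + 6 - 1) / 12)) - E2^2*E4^2*f*(C ((w + 1) / 12)))) * h1
    + (6 * (-(E6^2*f*(C ((w + 6) / 6))) + E6^2*f*(C ((w + 6 + 1) / 12)) - E4*f*(Dq E6)
      - E4*E6*(Dq f) + E2*E4*E6*f*(C ((w + 6 - 1) / 12)) + E2*E4^2*(Dq f)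
      + E2^2*E4^2*f*(C (1/12)) - E2^2*E4^2*f*(C w)*(C (1/12)))) * h2
    + (6 * (E2*E4*E6*f*(C (1/12)) + E2*E4*E6*f*(C w)*(C (1/12)) - E2*E4^2*(Dq f)
      - E2^2*E4^2*f*(C (1/12)) + E2^2*E4^2*f*(C w)*(C (1/12)))) * h3
    + (6 * (E6^2*f*(C (1/12)) + E6^2*f*(C w)*(C (1/12)) - E4*E6*(Dq f)
      - E2*E4*E6*f*(C (1/12)) + E2*E4*E6*f*(C w)*(C (1/12)))) * h4
    + (6 * (-(E6^2*f*(C (1/12))) - E6^2*f*(C w)*(C (1/12)) + E4*E6*(Dq f)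
      + E2*E4*E6*f*(C (1/12)) - E2*E4*E6*f*(C w)*(C (1/12)))) * h5
    + (6 * (E4^3*f)) * h6
    + (6 * (E6^2*f*(C (1/1728 : ℚ)) - E4^3*f*(C (1/1728 : ℚ)))) * h7
    + (6 * (60*E6^2*f + 72*E6^2*f*(C w) + 12*E6^2*f*(C w)^2 - 60*E4^3*f
      - 72*E4^3*f*(C w) - 12*E4^3*f*(C w)^2)) * h8
    + (2*E4*(Dq f) + 2*E2*E4*f*(C (1/12)) - 2*E2*E4*f*(C w)*(C (1/12))) * hE4
    + (-(3*E4*f*(C (1/12))) - 3*E4*f*(C w)*(C (1/12))) * hE6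
    + (30*E6^2*f*(C (1/12))^2 + 36*E6^2*f*(C w)*(C (1/12))^2
      + 6*E6^2*f*(C w)^2*(C (1/12))^2 + 2*E4*E6*(Dq f) - 3*E4^3*f*(C (1/12))
      - 30*E4^3*f*(C (1/12))^2 - 3*E4^3*f*(C w)*(C (1/12))
      - 36*E4^3*f*(C w)*(C (1/12))^2 - 6*E4^3*f*(C w)^2*(C (1/12))^2
      + 5*E2*E4*E6*f*(C (1/12)) + E2*E4*E6*f*(C w)*(C (1/12)) - 2*E2*E4^2*(Dq f)
      - 2*E2^2*E4^2*f*(C (1/12)) + 2*E2^2*E4^2*f*(C w)*(C (1/12))) * ht
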